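/- Let a = (a_1,…,a_n) ∈ ℤ^n with Σ_{i=1}^n a_i = 0, and fix m with 1 ≤ m ≤ n-1. Then the sum over all m-element subsets I ⊆ [n] of (Σ_{i∈I} a_i)^2 equals C(n-2, m-1) · Σ_{i=1}^n a_i^2. -/

import Mathlib

open Finset

lemma count_contain {α : Type*} [DecidableEq α] [Fintype α] (t : Finset α) (m : ℕ)
    (h : t.card ≤ m) :
    ((Finset.univ.powersetCard m).filter (fun I => t ⊆ I)).card
      = (Fintype.card α - t.card).choose (m - t.card) := by
  have : ((Finset.univ.powersetCard m).filter (fun I => t ⊆ I)).card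
      = (((Finset.univ : Finset α) \ t).powersetCard (m - t.card)).card := by
    apply Finset.card_bij' (fun I _ => I \ t) (fun J _ => J ∪ t)
    · intro I hI
      simp only [mem_filter, mem_powersetCard] at hI
      obtain ⟨⟨-, hc⟩, hts⟩ := hI
      simp only [mem_powersetCard]
      exact ⟨sdiff_subset_sdiff (subset_univ _) le_rfl, by rw [card_sdiff_of_subset hts, hc]⟩
    · intro J hJ
      simp only [mem_powersetCard] at hJ
      obtain ⟨hJs, hJc⟩ := hJ
      have hdisj : Disjoint J t := disjoint_of_subset_left hJs (sdiff_disjoint)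
      simp only [mem_filter, mem_powersetCard]
      refine ⟨⟨subset_univ _, ?_⟩, subset_union_right⟩
      rw [card_union_of_disjoint hdisj, hJc]; omega
    · intro I hI
      simp only [mem_filter, mem_powersetCard] at hI
      exact sdiff_union_of_subset hI.2
    · intro J hJ
      simp only [mem_powersetCard] at hJ
      exact Finset.union_sdiff_cancel_right (disjoint_of_subset_left hJ.1 sdiff_disjoint)
  rw [this, card_powersetCard, card_sdiff_of_subset (subset_univ t), card_univ]

lemma count_contain_empty {α : Type*} [DecidableEq α] [Fintype α] (t : Finset α) (m : ℕ)
    (h : m < t.card) :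
    ((Finset.univ.powersetCard m).filter (fun I => t ⊆ I)).card = 0 := by
  rw [card_eq_zero, filter_eq_empty_iff]
  intro I hI hsub
  simp only [mem_powersetCard] at hI
  have := card_le_card hsub
  omega

theorem sum_of_squares_over_subsets
    (n m : ℕ) (hm1 : 1 ≤ m) (hm2 : m ≤ n - 1)
    (a : Fin n → ℤ) (hsum : ∑ i, a i = 0) :
    ∑ I ∈ Finset.univ.powersetCard m, (∑ i ∈ I, a i) ^ 2
      = (n - 2).choose (m - 1) * ∑ i, (a i) ^ 2 := by
  have hn : 2 ≤ n := by omega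
  have hcij : ∀ i j : Fin n,
      ((Finset.univ.powersetCard m).filter (fun I => i ∈ I ∧ j ∈ I))
      = ((Finset.univ.powersetCard m).filter (fun I => ({i, j} : Finset (Fin n)) ⊆ I)) := by
    intro i j; apply filter_congr; intro I _; simp [insert_subset_iff]
  have hdiag : ∀ i : Fin n,
      ((Finset.univ.powersetCard m).filter (fun I => i ∈ I ∧ i ∈ I)).card
        = (n - 1).choose (m - 1) := by
    intro i
    have h2 : ({i, i} : Finset (Fin n)) = {i} := by simp
    rw [hcij i i, h2, count_contain _ m (by simpa using hm1)]
    simp [Fintype.card_fin]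
  have hoff : ∀ i j : Fin n, i ≠ j →
      (((Finset.univ.powersetCard m).filter (fun I => i ∈ I ∧ j ∈ I)).card : ℤ)
      = (n - 1).choose (m - 1) - (n - 2).choose (m - 1) := by
    intro i j hij
    have hcard : ({i, j} : Finset (Fin n)).card = 2 := card_pair hij
    rcases le_or_gt 2 m with hm | hm
    · rw [hcij i j, count_contain _ m (by rw [hcard]; omega), hcard, Fintype.card_fin]
      have pascal : (n - 1).choose (m - 1) = (n - 2).choose (m - 2) + (n - 2).choose (m - 1) := by
        have h1 : n - 1 = (n - 2) + 1 := by omega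
        have h2 : m - 1 = (m - 2) + 1 := by omega
        rw [h1, h2, Nat.choose_succ_succ]
      push_cast [pascal]; ring
    · have hm' : m = 1 := by omega
      subst hm'
      rw [hcij i j, count_contain_empty _ 1 (by rw [hcard]; omega)]
      simp
  have expand : ∀ I : Finset (Fin n), (∑ i ∈ I, a i) ^ 2
      = ∑ i, ∑ j, (if i ∈ I ∧ j ∈ I then a i * a j else 0) := by
    intro I
    rw [sq, Finset.sum_mul_sum]
    have inner : ∀ i : Fin n, ∑ j, (if i ∈ I ∧ j ∈ I then a i * a j else 0)
        = if i ∈ I then ∑ j ∈ I, a i * a j else 0 := by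
      intro i
      split_ifs with h
      · simp [h, Finset.sum_ite_mem]
      · simp [h]
    rw [Finset.sum_congr rfl fun i _ => (inner i)]
    simp [Finset.sum_ite_mem]
  calc ∑ I ∈ Finset.univ.powersetCard m, (∑ i ∈ I, a i) ^ 2
      = ∑ I ∈ Finset.univ.powersetCard m, ∑ i, ∑ j,
          (if i ∈ I ∧ j ∈ I then a i * a j else 0) :=
        Finset.sum_congr rfl fun I _ => expand I
    _ = ∑ i, ∑ j, ∑ I ∈ Finset.univ.powersetCard m,
          (if i ∈ I ∧ j ∈ I then a i * a j else 0) := by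
        rw [Finset.sum_comm]
        exact Finset.sum_congr rfl fun i _ => Finset.sum_comm
    _ = ∑ i, ∑ j,
          ((((Finset.univ.powersetCard m).filter (fun I => i ∈ I ∧ j ∈ I)).card : ℤ)
            * (a i * a j)) := by
        refine Finset.sum_congr rfl fun i _ => Finset.sum_congr rfl fun j _ => ?_
        rw [Finset.sum_ite, Finset.sum_const_zero, add_zero, Finset.sum_const, nsmul_eq_mul]
    _ = ∑ i, ∑ j,
          ((((n - 1).choose (m - 1) : ℤ) - (n - 2).choose (m - 1)) * (a i * a j)
            + (if i = j then ((n - 2).choose (m - 1) : ℤ) * (a i * a j) else 0)) := by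
        refine Finset.sum_congr rfl fun i _ => Finset.sum_congr rfl fun j _ => ?_
        rcases eq_or_ne i j with rfl | hij
        · rw [hdiag i]; simp; ring
        · rw [hoff i j hij]; simp [hij]
    _ = (n - 2).choose (m - 1) * ∑ i, (a i) ^ 2 := by
        simp only [Finset.sum_add_distrib]
        have h1 : ∑ i : Fin n, ∑ j : Fin n,
            (((n - 1).choose (m - 1) : ℤ) - (n - 2).choose (m - 1)) * (a i * a j) = 0 := by
          simp only [show ∀ i j : Fin n,
              (((n - 1).choose (m - 1) : ℤ) - (n - 2).choose (m - 1)) * (a i * a j)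
              = ((((n - 1).choose (m - 1) : ℤ) - (n - 2).choose (m - 1)) * a i) * a j
            from fun i j => by ring, ← Finset.mul_sum, hsum, mul_zero,
            Finset.sum_const_zero]
        rw [h1, zero_add]
        have h2 : ∀ i : Fin n, ∑ j : Fin n,
            (if i = j then ((n - 2).choose (m - 1) : ℤ) * (a i * a j) else 0)
            = ((n - 2).choose (m - 1) : ℤ) * a i ^ 2 := by
          intro i
          rw [Finset.sum_ite_eq (Finset.univ) i (fun j => ((n - 2).choose (m - 1) : ℤ) * (a i * a j))]
          simp [sq]
        rw [Finset.sum_congr rfl fun i _ => h2 i, ← Finset.mul_sum]
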